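/- Interleaving gives a charge-additive bijection between edge sequences and r-tuples of edge sequences: the map b ↦ (b^0,...,b^{r-1}) with b^i(j) = b(rj+i) is a bijection from edge sequences to r-tuples of edge sequences, and charge(b) = Σ_{i=0}^{r-1} charge(b^i). -/
import Mathlib

/-- An *edge sequence*: a predicate on `ℤ` (`True` = a `1`, `False` = a `0`),
eventually `1` in one direction and eventually `0` in the other. -/
def IsEdgeSeq (b : ℤ → Prop) : Prop :=
  (∃ N : ℤ, ∀ i : ℤ, N ≤ i → b i) ∧ (∃ N : ℤ, ∀ i : ℤ, i ≤ N → ¬ b i)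

/-- The charge of an edge sequence: the position of the boundary after sorting the
sequence (by repeatedly swapping adjacent inversions) into the fully sorted sequence
with no inversions; normalized so that the sorted sequence consisting of all `1`'s at
positions `≥ m` has charge `-m`. -/
noncomputable def esCharge (b : ℤ → Prop) : ℤ :=
  (Nat.card {i : ℤ // i < 0 ∧ b i} : ℤ) - (Nat.card {i : ℤ // 0 ≤ i ∧ ¬ b i} : ℤ)

section aux

lemma es_mod {r : ℕ} (s : Fin r) (j : ℤ) : ((r : ℤ) * j + (s : ℕ)) % r = (s : ℕ) := by
  have h0 : (0:ℤ) ≤ (s:ℕ) := Int.ofNat_nonneg _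
  have h1 : ((s:ℕ):ℤ) < (r:ℤ) := by exact_mod_cast s.isLt
  rw [add_comm, Int.add_mul_emod_self_left, Int.emod_eq_of_lt h0 h1]

lemma es_div {r : ℕ} (hr : 0 < r) (s : Fin r) (j : ℤ) : ((r : ℤ) * j + (s : ℕ)) / r = j := by
  have h0 : (0:ℤ) ≤ (s:ℕ) := Int.ofNat_nonneg _
  have h1 : ((s:ℕ):ℤ) < (r:ℤ) := by exact_mod_cast s.isLt
  have hr' : (0:ℤ) < r := by exact_mod_cast hr
  rw [add_comm, Int.add_mul_ediv_left _ _ (ne_of_gt hr'), Int.ediv_eq_zero_of_lt h0 h1,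
    zero_add]

lemma es_neg_iff {r : ℕ} (hr : 0 < r) (s : Fin r) (j : ℤ) :
    ((r : ℤ) * j + (s : ℕ) < 0) ↔ j < 0 := by
  have h0 : (0:ℤ) ≤ (s:ℕ) := Int.ofNat_nonneg _
  have h1 : ((s:ℕ):ℤ) < (r:ℤ) := by exact_mod_cast s.isLt
  have hr' : (0:ℤ) < r := by exact_mod_cast hr
  constructor
  · intro h
    by_contra hj
    push_neg at hj
    nlinarith
  · intro h
    have : j ≤ -1 := by omega
    nlinarith

lemma toNat_mod_lt {r : ℕ} (hr : 0 < r) (i : ℤ) : (i % r).toNat < r := by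
  have hr' : (0:ℤ) < r := by exact_mod_cast hr
  have := Int.emod_lt_of_pos i hr'
  have := Int.emod_nonneg i (ne_of_gt hr')
  omega

lemma cast_toNat_mod {r : ℕ} (hr : 0 < r) (i : ℤ) : (((i % r).toNat : ℕ) : ℤ) = i % r := by
  have hr' : (0:ℤ) < r := by exact_mod_cast hr
  have := Int.emod_nonneg i (ne_of_gt hr')
  omega

lemma div_add_key {r : ℕ} (hr : 0 < r) (i : ℤ) :
    (r:ℤ) * (i / r) + (((i % (r:ℤ)).toNat : ℕ) : ℤ) = i := by
  rw [cast_toNat_mod hr, Int.mul_ediv_add_emod]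

/-- Splitting a subtype of `ℤ` along residues mod `r`. -/
noncomputable def sigEquiv {r : ℕ} (hr : 0 < r) (Q : ℤ → Prop) :
    {i : ℤ // Q i} ≃ (s : Fin r) × {j : ℤ // Q ((r : ℤ) * j + (s : ℕ))} where
  toFun i := ⟨⟨(i.1 % r).toNat, toNat_mod_lt hr i.1⟩,
    ⟨i.1 / r, by rw [div_add_key hr]; exact i.2⟩⟩
  invFun x := ⟨(r:ℤ) * x.2.1 + (x.1 : ℕ), x.2.2⟩
  left_inv i := by
    apply Subtype.ext
    exact div_add_key hr i.1
  right_inv x := by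
    obtain ⟨s, j, hj⟩ := x
    apply Sigma.subtype_ext
    · apply Fin.ext
      simp only
      have := es_mod s j
      omega
    · simp only
      exact es_div hr s j

lemma nat_card_split {r : ℕ} (hr : 0 < r) (Q : ℤ → Prop)
    [∀ s : Fin r, Finite {j : ℤ // Q ((r:ℤ) * j + (s:ℕ))}] :
    Nat.card {i : ℤ // Q i} = ∑ s : Fin r, Nat.card {j : ℤ // Q ((r:ℤ) * j + (s:ℕ))} := by
  rw [Nat.card_congr (sigEquiv hr Q)]
  have inst := fun s : Fin r => Fintype.ofFinite {j : ℤ // Q ((r:ℤ) * j + (s:ℕ))}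
  simp [Nat.card_eq_fintype_card, Fintype.card_sigma]

lemma finite_lower {b : ℤ → Prop} (N : ℤ) (hN : ∀ i : ℤ, i ≤ N → ¬ b i) :
    Finite {i : ℤ // i < 0 ∧ b i} := by
  have hsub : {i : ℤ | i < 0 ∧ b i} ⊆ Set.Ioo N 0 := by
    rintro i ⟨hi, hb⟩
    refine ⟨?_, hi⟩
    by_contra h; exact hN i (by omega) hb
  exact ((Set.finite_Ioo N 0).subset hsub).to_subtype

lemma finite_upper {b : ℤ → Prop} (N : ℤ) (hN : ∀ i : ℤ, N ≤ i → b i) :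
    Finite {i : ℤ // 0 ≤ i ∧ ¬ b i} := by
  have hsub : {i : ℤ | 0 ≤ i ∧ ¬ b i} ⊆ Set.Ico 0 N := by
    rintro i ⟨hi, hb⟩
    refine ⟨hi, ?_⟩
    by_contra h; exact hb (hN i (by omega))
  exact ((Set.finite_Ico 0 N).subset hsub).to_subtype

lemma isEdgeSeq_slice {r : ℕ} (hr : 0 < r) {b : ℤ → Prop} (hb : IsEdgeSeq b) (s : Fin r) :
    IsEdgeSeq (fun j : ℤ => b ((r:ℤ) * j + (s:ℕ))) := by
  obtain ⟨⟨N₁, hN₁⟩, ⟨N₂, hN₂⟩⟩ := hb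
  have hr' : (1:ℤ) ≤ r := by exact_mod_cast hr
  have hs : ((s:ℕ):ℤ) < (r:ℤ) := by exact_mod_cast s.isLt
  have hs0 : (0:ℤ) ≤ (s:ℕ) := Int.ofNat_nonneg _
  constructor
  · refine ⟨max N₁ 0, fun j hj => ?_⟩
    apply hN₁
    have hj0 : 0 ≤ j := le_trans (le_max_right _ _) hj
    nlinarith [le_trans (le_max_left N₁ 0) hj]
  · refine ⟨min (N₂ - r) 0, fun j hj => ?_⟩
    apply hN₂
    have hj0 : j ≤ 0 := le_trans hj (min_le_right _ _)
    have hj1 : j ≤ N₂ - r := le_trans hj (min_le_left _ _)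
    nlinarith

end aux

/-- Interleaving gives a charge-additive bijection between edge
sequences and `r`-tuples of edge sequences: the map `b ↦ (b⁰, …, b^{r-1})` with
`bⁱ j = b (r*j + i)` is a bijection from edge sequences to `r`-tuples of edge
sequences, and `charge b = ∑ i, charge bⁱ`. -/
theorem stmt3 (r : ℕ) (hr : 1 ≤ r) :
    Set.BijOn (fun (b : ℤ → Prop) (s : Fin r) (j : ℤ) => b (r * j + (s : ℕ)))
      {b : ℤ → Prop | IsEdgeSeq b}
      {c : Fin r → ℤ → Prop | ∀ s : Fin r, IsEdgeSeq (c s)} ∧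
    (∀ b : ℤ → Prop, IsEdgeSeq b →
      esCharge b = ∑ s : Fin r, esCharge (fun j : ℤ => b (r * j + (s : ℕ)))) := by
  have hr0 : 0 < r := hr
  have hr' : (0:ℤ) < r := by exact_mod_cast hr0
  constructor
  · refine ⟨?_, ?_, ?_⟩
    · intro b hb s
      exact isEdgeSeq_slice hr0 hb s
    · intro b _ b' _ h
      funext i
      have := congrFun (congrFun h ⟨(i % r).toNat, toNat_mod_lt hr0 i⟩) (i / r)
      simp only at this
      rwa [div_add_key hr0] at this
    · intro c hc
      refine ⟨fun i => c ⟨(i % r).toNat, toNat_mod_lt hr0 i⟩ (i / r), ?_, ?_⟩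
      · constructor
        · have hNs : ∀ s : Fin r, ∃ N : ℤ, ∀ j : ℤ, N ≤ j → c s j := fun s => (hc s).1
          choose N hN using hNs
          have hne : (Finset.univ : Finset (Fin r)).Nonempty := by
            simpa [Finset.univ_nonempty_iff] using (Fin.pos_iff_nonempty.mp hr0)
          set M := Finset.univ.sup' hne N with hM
          refine ⟨(max M 0) * r, fun i hi => ?_⟩
          have h1 : max M 0 ≤ i / r := by
            rw [Int.le_ediv_iff_mul_le hr']
            exact hi
          exact hN _ _ (le_trans (Finset.le_sup' N (Finset.mem_univ _))
            (le_trans (le_max_left _ _) h1))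
        · have hNs : ∀ s : Fin r, ∃ N : ℤ, ∀ j : ℤ, j ≤ N → ¬ c s j := fun s => (hc s).2
          choose N hN using hNs
          have hne : (Finset.univ : Finset (Fin r)).Nonempty := by
            simpa [Finset.univ_nonempty_iff] using (Fin.pos_iff_nonempty.mp hr0)
          set M := Finset.univ.inf' hne N with hM
          refine ⟨(min M 0) * r, fun i hi => ?_⟩
          have h1 : i / r ≤ min M 0 := by
            calc i / r ≤ (min M 0 * r) / r := Int.ediv_le_ediv hr' hi
            _ = min M 0 := Int.mul_ediv_cancel _ (ne_of_gt hr')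
          exact hN _ _ (le_trans h1 (le_trans (min_le_left _ _)
            (Finset.inf'_le N (Finset.mem_univ _))))
      · funext s j
        simp only
        congr 1
        · apply Fin.ext
          simp only
          have := es_mod s j
          omega
        · exact es_div hr0 s j
  · intro b hb
    obtain ⟨⟨N₁, hN₁⟩, ⟨N₂, hN₂⟩⟩ := hb
    have hb' : IsEdgeSeq b := ⟨⟨N₁, hN₁⟩, ⟨N₂, hN₂⟩⟩
    have fin1 : ∀ s : Fin r, Finite {j : ℤ // j < 0 ∧ b ((r:ℤ) * j + (s:ℕ))} := by
      intro s
      obtain ⟨M, hM⟩ := (isEdgeSeq_slice hr0 hb' s).2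
      exact finite_lower M hM
    have fin2 : ∀ s : Fin r, Finite {j : ℤ // 0 ≤ j ∧ ¬ b ((r:ℤ) * j + (s:ℕ))} := by
      intro s
      obtain ⟨M, hM⟩ := (isEdgeSeq_slice hr0 hb' s).1
      exact finite_upper M hM
    have e1 : ∀ s : Fin r, ∀ j : ℤ,
        ((r:ℤ) * j + (s:ℕ) < 0 ∧ b ((r:ℤ) * j + (s:ℕ))) ↔ (j < 0 ∧ b ((r:ℤ) * j + (s:ℕ))) :=
      fun s j => and_congr_left' (es_neg_iff hr0 s j)
    have e2 : ∀ s : Fin r, ∀ j : ℤ,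
        (0 ≤ (r:ℤ) * j + (s:ℕ) ∧ ¬ b ((r:ℤ) * j + (s:ℕ))) ↔
        (0 ≤ j ∧ ¬ b ((r:ℤ) * j + (s:ℕ))) := by
      intro s j
      apply and_congr_left'
      rw [← not_lt, ← not_lt, not_iff_not]
      exact es_neg_iff hr0 s j
    have fin1' : ∀ s : Fin r, Finite {j : ℤ // (r:ℤ) * j + (s:ℕ) < 0 ∧ b ((r:ℤ) * j + (s:ℕ))} := by
      intro s
      have := fin1 s
      exact Finite.of_equiv _ (Equiv.subtypeEquivRight (fun j => (e1 s j).symm))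
    have fin2' : ∀ s : Fin r,
        Finite {j : ℤ // 0 ≤ (r:ℤ) * j + (s:ℕ) ∧ ¬ b ((r:ℤ) * j + (s:ℕ))} := by
      intro s
      have := fin2 s
      exact Finite.of_equiv _ (Equiv.subtypeEquivRight (fun j => (e2 s j).symm))
    have h1 : Nat.card {i : ℤ // i < 0 ∧ b i}
        = ∑ s : Fin r, Nat.card {j : ℤ // j < 0 ∧ b ((r:ℤ) * j + (s:ℕ))} := by
      rw [nat_card_split hr0 (fun i => i < 0 ∧ b i)]
      exact Finset.sum_congr rfl fun s _ =>
        Nat.card_congr (Equiv.subtypeEquivRight (e1 s))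
    have h2 : Nat.card {i : ℤ // 0 ≤ i ∧ ¬ b i}
        = ∑ s : Fin r, Nat.card {j : ℤ // 0 ≤ j ∧ ¬ b ((r:ℤ) * j + (s:ℕ))} := by
      rw [nat_card_split hr0 (fun i => 0 ≤ i ∧ ¬ b i)]
      exact Finset.sum_congr rfl fun s _ =>
        Nat.card_congr (Equiv.subtypeEquivRight (e2 s))
    simp only [esCharge, h1, h2]
    push_cast
    rw [Finset.sum_sub_distrib]
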